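/- Let f, η : ℝ → ℝ be convex and differentiable, let q(u) = ∫₀ᵘ η'(ξ) f'(ξ) dξ, and define for u, v ∈ ℝ with s = (f(u)-f(v))/(u-v) when u ≠ v: P(v,u) = (v-u)·(s·(η(u)-η(v)) - (q(u)-q(v))). Then P(v,u) ≥ 0 for all u ≠ v. -/
import Mathlib

open intervalIntegral

/-- Product of two monotone functions is interval integrable. -/
lemma mono_mul_intervalIntegrable {g h : ℝ → ℝ} (hg : Monotone g) (hh : Monotone h)
    (a b : ℝ) : IntervalIntegrable (fun x => g x * h x) MeasureTheory.volume a b := by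
  rw [intervalIntegrable_iff]
  refine MeasureTheory.Integrable.bdd_mul (c := max ‖g (min a b)‖ ‖g (max a b)‖)
    ((hh.intervalIntegrable (a := a) (b := b)).def') (hg.measurable.aestronglyMeasurable) ?_
  refine Filter.eventually_of_mem (MeasureTheory.self_mem_ae_restrict measurableSet_uIoc) ?_
  intro x hx
  have hmem : min a b ≤ x ∧ x ≤ max a b := by
    simpa [Set.uIcc, Set.mem_Icc] using Set.uIoc_subset_uIcc hx
  rw [Real.norm_eq_abs, abs_le]
  have e1 := hg hmem.1
  have e2 := hg hmem.2
  have n1 := neg_abs_le (g (min a b))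
  have n2 := le_abs_self (g (max a b))
  constructor
  · have : -‖g (min a b)‖ ≤ g x := by rw [Real.norm_eq_abs]; linarith
    exact le_trans (neg_le_neg (le_max_left _ _)) this
  · have : g x ≤ ‖g (max a b)‖ := by rw [Real.norm_eq_abs]; linarith
    exact le_trans this (le_max_right _ _)

lemma entropy_key (f η : ℝ → ℝ)
    (hf : ConvexOn ℝ Set.univ f) (hη : ConvexOn ℝ Set.univ η)
    (hfd : Differentiable ℝ f) (hηd : Differentiable ℝ η)
    (q : ℝ → ℝ) (hq : ∀ u : ℝ, q u = ∫ ξ in (0:ℝ)..u, deriv η ξ * deriv f ξ)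
    (v u : ℝ) (hvu : v < u) :
    0 ≤ (v - u) * (((f u - f v) / (u - v)) * (η u - η v) - (q u - q v)) := by
  have huv : u - v ≠ 0 := by linarith
  -- monotone derivatives
  have hmf : Monotone (deriv f) := by
    have := hf.monotoneOn_deriv (fun x _ => hfd x)
    intro x y hxy; exact this (Set.mem_univ x) (Set.mem_univ y) hxy
  have hmη : Monotone (deriv η) := by
    have := hη.monotoneOn_deriv (fun x _ => hηd x)
    intro x y hxy; exact this (Set.mem_univ x) (Set.mem_univ y) hxy
  set s : ℝ := (f u - f v) / (u - v) with hs_def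
  have hs : s * (u - v) = f u - f v := div_mul_cancel₀ _ huv
  -- MVT: find c with deriv f c = s
  obtain ⟨c, hc, hfc⟩ := exists_deriv_eq_slope f hvu (hfd.continuous.continuousOn)
    (hfd.differentiableOn)
  rw [← hs_def] at hfc
  -- integrability facts
  have hif : IntervalIntegrable (deriv f) MeasureTheory.volume v u := hmf.intervalIntegrable
  have hiη : IntervalIntegrable (deriv η) MeasureTheory.volume v u := hmη.intervalIntegrable
  have hiprod : ∀ a b : ℝ, IntervalIntegrable (fun ξ => deriv η ξ * deriv f ξ)
      MeasureTheory.volume a b := fun a b => mono_mul_intervalIntegrable hmη hmf a b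
  -- FTC
  have hηsub : (∫ ξ in v..u, deriv η ξ) = η u - η v :=
    integral_deriv_eq_sub (fun x _ => hηd x) hiη
  have hfsub : (∫ ξ in v..u, deriv f ξ) = f u - f v :=
    integral_deriv_eq_sub (fun x _ => hfd x) hif
  have hqsub : q u - q v = ∫ ξ in v..u, deriv η ξ * deriv f ξ := by
    rw [hq u, hq v, integral_interval_sub_left (hiprod 0 u) (hiprod 0 v)]
  -- integrability of the comparison integrands
  have hi1 : IntervalIntegrable (fun ξ => deriv η ξ * (deriv f ξ - s))
      MeasureTheory.volume v u := by
    have : (fun ξ => deriv η ξ * (deriv f ξ - s))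
        = fun ξ => deriv η ξ * deriv f ξ - deriv η ξ * s := by funext ξ; ring
    rw [this]
    exact (hiprod v u).sub (hiη.mul_const s)
  have hi2 : IntervalIntegrable (fun ξ => deriv η c * (deriv f ξ - s))
      MeasureTheory.volume v u :=
    (hif.sub (intervalIntegrable_const)).const_mul _
  -- pointwise inequality
  have hpt : ∀ ξ ∈ Set.Icc v u,
      deriv η c * (deriv f ξ - s) ≤ deriv η ξ * (deriv f ξ - s) := by
    intro ξ hξ
    rcases le_total ξ c with h | h
    · have h1 : deriv η ξ ≤ deriv η c := hmη h
      have h2 : deriv f ξ ≤ s := hfc ▸ hmf h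
      nlinarith
    · have h1 : deriv η c ≤ deriv η ξ := hmη h
      have h2 : s ≤ deriv f ξ := hfc ▸ hmf h
      nlinarith
  -- integral of comparison function is zero
  have hzero : (∫ ξ in v..u, deriv η c * (deriv f ξ - s)) = 0 := by
    rw [integral_const_mul, integral_sub hif intervalIntegrable_const, hfsub,
      integral_const, smul_eq_mul]
    rw [mul_comm (u - v) s, hs]
    ring
  have hI : 0 ≤ ∫ ξ in v..u, deriv η ξ * (deriv f ξ - s) := by
    rw [← hzero]
    exact integral_mono_on hvu.le hi2 hi1 hpt
  -- rewrite the goal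
  have hexpand : (∫ ξ in v..u, deriv η ξ * (deriv f ξ - s))
      = (q u - q v) - s * (η u - η v) := by
    have : (fun ξ => deriv η ξ * (deriv f ξ - s))
        = fun ξ => deriv η ξ * deriv f ξ - deriv η ξ * s := by funext ξ; ring
    rw [this, integral_sub (hiprod v u) (hiη.mul_const s), integral_mul_const, hηsub, hqsub]
    ring
  rw [hexpand] at hI
  nlinarith [hI]

/-- For convex differentiable `f` and `η`, with entropy flux `q(u) = ∫₀ᵘ η' f'`,
the quantity `P(v,u) = (v-u)(s(η(u)-η(v)) - (q(u)-q(v)))`, with `s` the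
Rankine–Hugoniot slope, is nonnegative. -/
theorem entropy_production_nonneg
    (f η : ℝ → ℝ)
    (hf : ConvexOn ℝ Set.univ f) (hη : ConvexOn ℝ Set.univ η)
    (hfd : Differentiable ℝ f) (hηd : Differentiable ℝ η)
    (q : ℝ → ℝ) (hq : ∀ u : ℝ, q u = ∫ ξ in (0:ℝ)..u, deriv η ξ * deriv f ξ)
    (u v : ℝ) (huv : u ≠ v) :
    0 ≤ (v - u) * (((f u - f v) / (u - v)) * (η u - η v) - (q u - q v)) := by
  rcases lt_or_gt_of_ne huv with h | h
  · -- u < v : apply key with roles swapped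
    have key := entropy_key f η hf hη hfd hηd q hq u v h
    have hdiv : (f v - f u) / (v - u) = (f u - f v) / (u - v) := by
      rw [← neg_div_neg_eq]; ring_nf
    rw [hdiv] at key
    nlinarith [key]
  · exact entropy_key f η hf hη hfd hηd q hq v u h
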